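/- Let q be a prime power, let n > m ≥ 1 be integers, and let a ∈ F_q be nonzero. Set d = gcd(n,m), N = n/d and M = m/d. Then the polynomial X^n − X^{n−m} + a ∈ F_q[X] has a repeated root in an algebraic closure of F_q if and only if n^N · a^M − m^M · (n−m)^{N−M} = 0 in F_q, where the integers n, m, n−m are regarded as elements of F_q via the canonical ring map ℤ → F_q. -/

import Mathlib

open Polynomial

private lemma sq_dvd_iff_aux {F : Type*} [Field F] {p : F[X]} (hp : p ≠ 0) (α : F) :
    (X - C α) ^ 2 ∣ p ↔ p.eval α = 0 ∧ p.derivative.eval α = 0 := by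
  rw [← Polynomial.le_rootMultiplicity_iff hp, show (2:ℕ) = 1 + 1 from rfl,
    Nat.add_one_le_iff, Polynomial.one_lt_rootMultiplicity_iff_isRoot hp]
  rfl

private lemma bezout_pow {G : Type*} [CommGroup G] (x y : G) (MM KK : ℕ) (s t : ℤ)
    (h : y ^ (MM : ℤ) = x ^ (KK : ℤ)) (hst : s * MM + t * KK = 1) :
    (x ^ s * y ^ t) ^ (MM : ℤ) = x ∧ (x ^ s * y ^ t) ^ (KK : ℤ) = y := by
  constructor
  · calc (x ^ s * y ^ t) ^ (MM:ℤ) = (x ^ s) ^ (MM:ℤ) * (y ^ t) ^ (MM:ℤ) := mul_zpow _ _ _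
    _ = x ^ (s * MM) * y ^ (t * MM) := by rw [← zpow_mul, ← zpow_mul]
    _ = x ^ (s * MM) * (y ^ (MM:ℤ)) ^ t := by rw [← zpow_mul, mul_comm t (MM:ℤ)]
    _ = x ^ (s * MM) * x ^ ((KK:ℤ) * t) := by rw [h, ← zpow_mul]
    _ = x ^ (s * MM + KK * t) := (zpow_add _ _ _).symm
    _ = x ^ (1:ℤ) := by congr 1; linarith
    _ = x := zpow_one x
  · calc (x ^ s * y ^ t) ^ (KK:ℤ) = (x ^ s) ^ (KK:ℤ) * (y ^ t) ^ (KK:ℤ) := mul_zpow _ _ _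
    _ = x ^ (s * KK) * y ^ (t * KK) := by rw [← zpow_mul, ← zpow_mul]
    _ = (x ^ (KK:ℤ)) ^ s * y ^ (t * KK) := by rw [← zpow_mul, mul_comm s (KK:ℤ)]
    _ = y ^ ((MM:ℤ) * s) * y ^ (t * KK) := by rw [← h, ← zpow_mul]
    _ = y ^ ((MM:ℤ) * s + t * KK) := (zpow_add _ _ _).symm
    _ = y ^ (1:ℤ) := by congr 1; linarith
    _ = y := zpow_one y

theorem stmt_2 (K : Type*) [Field K] [Fintype K]
    (n m : ℕ) (hm : 1 ≤ m) (hmn : m < n) (a : K) (ha : a ≠ 0) :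
    (∃ α : AlgebraicClosure K,
        (X - C α) ^ 2 ∣
          (X ^ n - X ^ (n - m) + C a).map (algebraMap K (AlgebraicClosure K)))
      ↔ (n : K) ^ (n / Nat.gcd n m) * a ^ (m / Nat.gcd n m)
          - (m : K) ^ (m / Nat.gcd n m)
            * ((n - m : ℕ) : K) ^ (n / Nat.gcd n m - m / Nat.gcd n m) = 0 := by
  set F := AlgebraicClosure K
  set φ := algebraMap K F with hφ
  have hφinj : Function.Injective φ := (φ : K →+* F).injective
  set a' : F := φ a with ha'def
  have ha' : a' ≠ 0 := fun h => ha (hφinj (by rw [map_zero]; exact h))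
  set d := Nat.gcd n m with hd
  set N := n / d with hN
  set M := m / d with hM
  have hd0 : 0 < d := Nat.gcd_pos_of_pos_right n (by omega)
  have hdn : d ∣ n := Nat.gcd_dvd_left n m
  have hdm : d ∣ m := Nat.gcd_dvd_right n m
  have hdN : d * N = n := Nat.mul_div_cancel' hdn
  have hdM : d * M = m := Nat.mul_div_cancel' hdm
  have hMN : M < N := Nat.div_lt_div_of_lt_of_dvd hdn hmn
  have hM1 : 1 ≤ M := (Nat.one_le_div_iff hd0).mpr (Nat.le_of_dvd (by omega) hdm)
  have hnm : d * (N - M) = n - m := by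
    have h1 : d * (N - M) + d * M = d * N := by rw [← Nat.mul_add, Nat.sub_add_cancel hMN.le]
    omega
  have hexp : m * (N - M) = (n - m) * M := by
    rw [← hnm, ← hdM]; ring
  set g : F[X] := X ^ n - X ^ (n - m) + C a' with hg
  have hmapg : (X ^ n - X ^ (n - m) + C a).map φ = g := by
    simp [hg, Polynomial.map_add, Polynomial.map_sub, Polynomial.map_pow, ha'def]
  have hg0 : g ≠ 0 := fun h => by
    have := congrArg (Polynomial.eval (0:F)) h
    simp [hg, zero_pow (by omega : n ≠ 0), zero_pow (by omega : n - m ≠ 0)] at this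
    exact ha' this
  have hderiv : g.derivative = C (n : F) * X ^ (n - 1) - C ((n - m : ℕ) : F) * X ^ (n - m - 1) := by
    simp [hg, Polynomial.derivative_X_pow, Polynomial.C_eq_natCast]
  set c' : F := ((n - m : ℕ) : F) with hc'
  have hc'sub : c' = (n : F) - (m : F) := by
    rw [hc', Nat.cast_sub hmn.le]
  have heval : ∀ α : F, g.eval α = α ^ (n - m) * α ^ m - α ^ (n - m) + a' := by
    intro α
    simp [hg, ← pow_add, show n - m + m = n by omega]
  have hdeval : ∀ α : F, g.derivative.eval α
      = α ^ (n - m - 1) * ((n : F) * α ^ m - c') := by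
    intro α
    rw [hderiv]
    simp only [eval_sub, eval_mul, eval_C, eval_pow, eval_X]
    rw [show n - 1 = (n - m - 1) + m by omega, pow_add]
    ring
  have key : ((n : F) ^ N * a' ^ M - (m : F) ^ M * c' ^ (N - M) = 0)
      ↔ ((n : K) ^ N * a ^ M - (m : K) ^ M * ((n - m : ℕ) : K) ^ (N - M) = 0) := by
    constructor
    · intro h
      apply hφinj
      rw [map_sub, map_mul, map_mul, map_pow, map_pow, map_pow, map_pow, map_natCast,
        map_natCast, map_natCast, map_zero, ← ha'def, ← hc', h]
    · intro h
      have := congrArg φ h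
      rw [map_sub, map_mul, map_mul, map_pow, map_pow, map_pow, map_pow, map_natCast,
        map_natCast, map_natCast, map_zero, ← ha'def, ← hc'] at this
      exact this
  rw [← key]
  constructor
  · rintro ⟨α, hdvd⟩
    rw [hmapg, sq_dvd_iff_aux hg0] at hdvd
    obtain ⟨h1, h2⟩ := hdvd
    have hα0 : α ≠ 0 := by
      intro h
      rw [heval, h, zero_pow (by omega : n - m ≠ 0)] at h1
      simp at h1
      exact ha' h1
    rw [hdeval] at h2
    have hαpow : α ^ (n - m - 1) ≠ 0 := pow_ne_zero _ hα0
    have e1 : (n : F) * α ^ m = c' := by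
      rcases mul_eq_zero.mp h2 with h | h
      · exact absurd h hαpow
      · exact sub_eq_zero.mp h
    have e2 : (m : F) * α ^ (n - m) = (n : F) * a' := by
      rw [heval] at h1
      have h3 : (n : F) * (α ^ (n - m) * α ^ m - α ^ (n - m) + a') = 0 := by rw [h1]; ring
      have h4 : α ^ (n - m) * ((n : F) * α ^ m) - (n:F) * α ^ (n - m) + (n:F) * a' = 0 := by
        linear_combination h3
      rw [e1, hc'sub] at h4
      linear_combination -h4
    have E1 : (n : F) ^ (N - M) * (α ^ (m * (N - M))) = c' ^ (N - M) := by
      rw [pow_mul, ← mul_pow, e1]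
    have E2 : (m : F) ^ M * (α ^ ((n - m) * M)) = (n : F) ^ M * a' ^ M := by
      rw [pow_mul, ← mul_pow, e2, mul_pow]
    rw [hexp] at E1
    have hkey : (n : F) ^ (N - M) * ((m : F) ^ M * α ^ ((n - m) * M))
        = (m : F) ^ M * ((n : F) ^ (N - M) * α ^ ((n - m) * M)) := by ring
    rw [E1, E2] at hkey
    have hNsplit : (n : F) ^ (N - M) * ((n : F) ^ M * a' ^ M) = (n : F) ^ N * a' ^ M := by
      rw [← mul_assoc, ← pow_add, show N - M + M = N by omega]
    rw [hNsplit] at hkey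
    rw [hkey]; ring
  · intro H
    have H' : (n : F) ^ N * a' ^ M = (m : F) ^ M * c' ^ (N - M) := sub_eq_zero.mp H
    by_cases hn0 : (n : F) = 0
    · have hnN : (n : F) ^ N = 0 := by
        rw [hn0]; exact zero_pow (by omega)
      have hm0' : (m : F) = 0 ∧ c' = 0 := by
        rw [hnN, zero_mul] at H'
        rcases mul_eq_zero.mp H'.symm with h | h
        · have hm0 : (m : F) = 0 := pow_eq_zero_iff (by omega : M ≠ 0) |>.mp h
          exact ⟨hm0, by rw [hc'sub, hn0, hm0, sub_zero]⟩
        · have hc0 : c' = 0 := pow_eq_zero_iff (by omega : N - M ≠ 0) |>.mp h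
          refine ⟨?_, hc0⟩
          rw [hc'sub, hn0] at hc0
          linear_combination -hc0
      obtain ⟨hm0, hc0⟩ := hm0'
      have hdegn : g.degree = n := by
        rw [hg]
        compute_degree!
        · rw [if_neg (by omega : ¬ n = n - m), if_neg (by omega : ¬ n = 0)]
          norm_num
      have hdeg : g.degree ≠ 0 := by
        rw [hdegn]
        exact_mod_cast (show n ≠ 0 by omega)
      obtain ⟨α, hα⟩ := IsAlgClosed.exists_root g hdeg
      refine ⟨α, ?_⟩
      rw [hmapg, sq_dvd_iff_aux hg0]
      refine ⟨hα, ?_⟩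
      rw [hdeval, hn0, hc0]
      ring
    · have hne : (n : F) ^ N * a' ^ M ≠ 0 :=
        mul_ne_zero (pow_ne_zero _ hn0) (pow_ne_zero _ ha')
      rw [H'] at hne
      have hm0 : (m : F) ≠ 0 := fun h => hne (by rw [h, zero_pow (by omega : M ≠ 0), zero_mul])
      have hc0 : c' ≠ 0 := fun h => hne (by rw [h, zero_pow (by omega : N - M ≠ 0), mul_zero])
      set c : F := c' / (n : F) with hcdef
      set b : F := (n : F) * a' / (m : F) with hbdef
      have hc : c ≠ 0 := div_ne_zero hc0 hn0
      have hb : b ≠ 0 := div_ne_zero (mul_ne_zero hn0 ha') hm0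
      have hbc : b ^ M = c ^ (N - M) := by
        rw [hcdef, hbdef, div_pow, div_pow, div_eq_div_iff (pow_ne_zero _ hm0) (pow_ne_zero _ hn0)]
        rw [mul_pow, mul_comm ((n:F)^M * a'^M) ((n:F)^(N-M)), ← mul_assoc, ← pow_add,
          show N - M + M = N by omega]
        linear_combination H'
      have hcop : Nat.Coprime M (N - M) := by
        have h1 : Nat.Coprime N M := Nat.coprime_div_gcd_div_gcd hd0
        exact (Nat.coprime_sub_self_right hMN.le).mpr h1.symm
      obtain ⟨s, t, hst⟩ := Nat.isCoprime_iff_coprime.mpr hcop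
      set cu : Fˣ := Units.mk0 c hc with hcu
      set bu : Fˣ := Units.mk0 b hb with hbu
      have hbcu : bu ^ (M : ℤ) = cu ^ ((N - M : ℕ) : ℤ) := by
        ext
        push_cast
        simpa [hbu, hcu] using hbc
      obtain ⟨hbz1, hbz2⟩ := bezout_pow cu bu M (N - M) s t hbcu hst
      set γu : Fˣ := cu ^ s * bu ^ t with hγu
      have hdegroot : (X ^ d - C (γu : F) : F[X]).degree ≠ 0 := by
        rw [Polynomial.degree_X_pow_sub_C hd0]
        exact_mod_cast (show d ≠ 0 by omega)
      obtain ⟨α, hα⟩ := IsAlgClosed.exists_root (X ^ d - C (γu : F)) hdegroot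
      have hαd : α ^ d = (γu : F) := by
        have h := hα
        simp only [Polynomial.IsRoot, eval_sub, eval_pow, eval_X, eval_C, sub_eq_zero] at h
        exact h
      have hα0 : α ≠ 0 := by
        intro h
        rw [h, zero_pow (by omega : d ≠ 0)] at hαd
        exact (γu.ne_zero) hαd.symm
      set αu : Fˣ := Units.mk0 α hα0 with hαu
      have hαud : αu ^ d = γu := by
        ext; push_cast; exact hαd
      have hαm : αu ^ m = cu := by
        rw [← hdM, pow_mul, hαud, ← zpow_natCast γu M]
        exact hbz1
      have hαnm : αu ^ (n - m) = bu := by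
        rw [← hnm, pow_mul, hαud, ← zpow_natCast γu (N - M)]
        exact hbz2
      have hαmF : α ^ m = c := by
        have h := congrArg (Units.val) hαm
        push_cast at h
        simpa [hαu, hcu] using h
      have hαnmF : α ^ (n - m) = b := by
        have h := congrArg (Units.val) hαnm
        push_cast at h
        simpa [hαu, hbu] using h
      refine ⟨α, ?_⟩
      rw [hmapg, sq_dvd_iff_aux hg0]
      constructor
      · rw [heval, hαmF, hαnmF, hbdef, hcdef, hc'sub]
        linear_combination (a' * ((m : F))⁻¹ * ((n : F) - (m : F))) * mul_inv_cancel₀ hn0 + (-a') * mul_inv_cancel₀ hm0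
      · rw [hdeval, hαmF, hcdef]
        linear_combination (α ^ (n - m - 1) * c') * mul_inv_cancel₀ hn0
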